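/- arXiv:1209.4766 — 2 statements merged into one kernel-verified Lean document; each statement's English description precedes it below -/
import Mathlib

section
/- If a sequence φ_n ∈ 𝓒 satisfies sup_n ⟨φ_n, φ_n⟩_n < ∞, then there exist φ ∈ L²(E, ν) and a subsequence (n_k) such that ⟨φ_{n_k}, ψ⟩_{n_k} → ⟨φ, ψ⟩ as k → ∞ for every ψ ∈ 𝓒, i.e. φ_{n_k} w-converges to φ along the subsequence. -/
open MeasureTheory Filter Topology
open scoped RealInnerProductSpace

noncomputable section

namespace Mosco

variable {E : Type*} [MeasurableSpace E]

/-- The inner product of two real-valued functions with respect to a measure,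
`⟨φ, ψ⟩ = ∫ φ ψ dμ`. -/
def ip (μ : Measure E) (φ ψ : E → ℝ) : ℝ := ∫ x, φ x * ψ x ∂μ

/-- The framework of Section 2.1: mutually singular probability measures `ν n`, `n : ℕ`
(`ν 0` playing the role of the limit measure `ν`), such that `L²(E, ν 0)` is separable,
together with disjoint sets `En n` carrying `ν n`, and a linear subset `F = 𝓕 ⊆ 𝓓`
which is dense in `L²(E, ν 0)`. -/
structure Frame (E : Type*) [MeasurableSpace E] where
  ν : ℕ → Measure E
  prob : ∀ n, IsProbabilityMeasure (ν n)
  singular : ∀ m n, m ≠ n → (ν m).MutuallySingular (ν n)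
  separableL2 : TopologicalSpace.SeparableSpace (Lp ℝ 2 (ν 0))
  En : ℕ → Set E
  measEn : ∀ n, MeasurableSet (En n)
  disjEn : ∀ m n, m ≠ n → Disjoint (En m) (En n)
  nullEn : ∀ n, ν n (En n)ᶜ = 0
  F : Set (E → ℝ)
  F_measurable : ∀ φ ∈ F, Measurable φ
  F_memL2 : ∀ φ ∈ F, ∀ n, MemLp φ 2 (ν n)
  F_tendsto : ∀ φ ∈ F, Tendsto (fun n => ip (ν n) φ φ) atTop (𝓝 (ip (ν 0) φ φ))
  F_linear : ∀ φ ∈ F, ∀ ψ ∈ F, ∀ a b : ℝ, (fun x => a * φ x + b * ψ x) ∈ F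
  F_dense : ∀ f : E → ℝ, Measurable f → MemLp f 2 (ν 0) → ∀ ε : ℝ, 0 < ε →
    ∃ φ ∈ F, ip (ν 0) (fun x => f x - φ x) (fun x => f x - φ x) < ε

/-- The set `𝓓`: everywhere defined measurable functions lying in every `L²(E, ν n)`
whose `ν n`-norms converge to the `ν 0`-norm. -/
def Frame.D (fr : Frame E) : Set (E → ℝ) :=
  {φ | Measurable φ ∧ (∀ n, MemLp φ 2 (fr.ν n)) ∧
    Tendsto (fun n => ip (fr.ν n) φ φ) atTop (𝓝 (ip (fr.ν 0) φ φ))}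

/-- The set `𝓒`: elements of `𝓓` satisfying conditions (c1) and (c2). -/
def Frame.C (fr : Frame E) : Set (E → ℝ) :=
  {φ | φ ∈ fr.D ∧ (∀ n, 1 ≤ n → ∃ g ∈ fr.F, φ =ᵐ[fr.ν n] g) ∧
    ∀ ψ ∈ fr.F, Tendsto (fun n => ip (fr.ν n) φ ψ) atTop (𝓝 (ip (fr.ν 0) φ ψ))}

/-- The set `𝓥` of multipliers mapping `𝓓` into `𝓓` and `𝓕` into `𝓕`. -/
def Frame.V (fr : Frame E) : Set (E → ℝ) :=
  {ψ | Measurable ψ ∧ (∀ n, MemLp ψ 2 (fr.ν n)) ∧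
    (∀ σ ∈ fr.D, (fun x => σ x * ψ x) ∈ fr.D) ∧
    (∀ τ ∈ fr.F, (fun x => τ x * ψ x) ∈ fr.F)}

/-- `w`-convergence of a sequence `φs` (with `φs n` regarded as an element of
`L²(E, ν n)`) to `φ ∈ L²(E, ν 0)`. -/
def Frame.WConv (fr : Frame E) (φs : ℕ → E → ℝ) (φ : E → ℝ) : Prop :=
  ∀ ψ ∈ fr.C, Tendsto (fun n => ip (fr.ν n) (φs n) ψ) atTop (𝓝 (ip (fr.ν 0) φ ψ))

/-- `s`-convergence: `w`-convergence together with convergence of the norms. -/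
def Frame.SConv (fr : Frame E) (φs : ℕ → E → ℝ) (φ : E → ℝ) : Prop :=
  fr.WConv φs φ ∧
  Tendsto (fun n => ip (fr.ν n) (φs n) (φs n)) atTop (𝓝 (ip (fr.ν 0) φ φ))

variable {μ : Measure E} {φ ψ τ χ : E → ℝ}

theorem ip_eq_inner (hφ : MemLp φ 2 μ) (hψ : MemLp ψ 2 μ) :
    ip μ φ ψ = ⟪hφ.toLp φ, hψ.toLp ψ⟫ := by
  rw [MeasureTheory.L2.inner_def]
  refine integral_congr_ae ?_
  filter_upwards [hφ.coeFn_toLp, hψ.coeFn_toLp] with x h1 h2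
  rw [h1, h2]
  simp [RCLike.inner_apply, mul_comm]

theorem ip_self_eq (hφ : MemLp φ 2 μ) : ip μ φ φ = ‖hφ.toLp φ‖ ^ 2 := by
  rw [ip_eq_inner hφ hφ, real_inner_self_eq_norm_sq]

theorem sqrt_ip_self (hφ : MemLp φ 2 μ) : Real.sqrt (ip μ φ φ) = ‖hφ.toLp φ‖ := by
  rw [ip_self_eq hφ, Real.sqrt_sq (norm_nonneg _)]

theorem abs_ip_le (hφ : MemLp φ 2 μ) (hψ : MemLp ψ 2 μ) :
    |ip μ φ ψ| ≤ Real.sqrt (ip μ φ φ) * Real.sqrt (ip μ ψ ψ) := by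
  rw [ip_eq_inner hφ hψ, sqrt_ip_self hφ, sqrt_ip_self hψ]
  exact abs_real_inner_le_norm _ _

theorem ip_sub_right (hφ : MemLp φ 2 μ) (hψ : MemLp ψ 2 μ) (hτ : MemLp τ 2 μ) :
    ip μ φ (fun x => ψ x - τ x) = ip μ φ ψ - ip μ φ τ := by
  have h : MemLp (fun x => ψ x - τ x) 2 μ := hψ.sub hτ
  rw [ip_eq_inner hφ h, ip_eq_inner hφ hψ, ip_eq_inner hφ hτ, ← inner_sub_right]
  congr 1

theorem toLp_combo (hφ : MemLp φ 2 μ) (hψ : MemLp ψ 2 μ) (a b : ℝ)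
    (h : MemLp (fun x => a * φ x + b * ψ x) 2 μ) :
    h.toLp _ = a • hφ.toLp φ + b • hψ.toLp ψ := by
  rw [← MemLp.toLp_const_smul a hφ, ← MemLp.toLp_const_smul b hψ, ← MemLp.toLp_add]
  rfl

theorem ip_combo_right (hχ : MemLp χ 2 μ) (hφ : MemLp φ 2 μ) (hψ : MemLp ψ 2 μ) (a b : ℝ)
    (h : MemLp (fun x => a * φ x + b * ψ x) 2 μ) :
    ip μ χ (fun x => a * φ x + b * ψ x) = a * ip μ χ φ + b * ip μ χ ψ := by
  rw [ip_eq_inner hχ h, toLp_combo hφ hψ a b h, inner_add_right, real_inner_smul_right,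
    real_inner_smul_right, ip_eq_inner hχ hφ, ip_eq_inner hχ hψ]

theorem ip_sub_sub (hψ : MemLp ψ 2 μ) (hτ : MemLp τ 2 μ) :
    ip μ (fun x => ψ x - τ x) (fun x => ψ x - τ x)
      = ip μ ψ ψ - 2 * ip μ ψ τ + ip μ τ τ := by
  have h : MemLp (fun x => ψ x - τ x) 2 μ := hψ.sub hτ
  have e : h.toLp _ = hψ.toLp ψ - hτ.toLp τ := MemLp.toLp_sub hψ hτ
  rw [ip_eq_inner h h, ip_eq_inner hψ hψ, ip_eq_inner hψ hτ, ip_eq_inner hτ hτ, e,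
    real_inner_sub_sub_self]

theorem ip_sub_self (hφ : MemLp φ 2 μ) (hψ : MemLp ψ 2 μ) :
    ip μ (fun x => φ x - ψ x) (fun x => φ x - ψ x) = ‖hφ.toLp φ - hψ.toLp ψ‖ ^ 2 := by
  have h : MemLp (fun x => φ x - ψ x) 2 μ := hφ.sub hψ
  have e : h.toLp _ = hφ.toLp φ - hψ.toLp ψ := MemLp.toLp_sub hφ hψ
  rw [ip_self_eq h, e]

set_option maxHeartbeats 2000000 in
/-- Proposition 2.3 (b): if a sequence `φs n ∈ 𝓒` satisfies `sup_n ⟨φs n, φs n⟩ₙ < ∞`,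
then some subsequence `φs (nk k)` `w`-converges to some `φ ∈ L²(E, ν)`. -/
theorem exists_wconv_subseq (fr : Frame E) (φs : ℕ → E → ℝ) (hφs : ∀ n, φs n ∈ fr.C)
    (hbd : ∃ M : ℝ, ∀ n, ip (fr.ν n) (φs n) (φs n) ≤ M) :
    ∃ (φ : E → ℝ) (nk : ℕ → ℕ), Measurable φ ∧ MemLp φ 2 (fr.ν 0) ∧ StrictMono nk ∧
      ∀ ψ ∈ fr.C, Tendsto (fun k => ip (fr.ν (nk k)) (φs (nk k)) ψ)
        atTop (𝓝 (ip (fr.ν 0) φ ψ)) := by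
  classical
  haveI := fr.separableL2
  haveI := fr.prob 0
  obtain ⟨M₀, hM₀⟩ := hbd
  set R : ℝ := Real.sqrt (max M₀ 0) with hRdef
  have hRnn : 0 ≤ R := Real.sqrt_nonneg _
  have hφsmem : ∀ n m, MemLp (φs n) 2 (fr.ν m) := fun n => ((hφs n).1).2.1
  -- Cauchy–Schwarz bound
  have hcs : ∀ (n : ℕ) (ψ : E → ℝ), MemLp ψ 2 (fr.ν n) →
      |ip (fr.ν n) (φs n) ψ| ≤ R * Real.sqrt (ip (fr.ν n) ψ ψ) := by
    intro n ψ hψ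
    refine le_trans (abs_ip_le (hφsmem n n) hψ) ?_
    refine mul_le_mul_of_nonneg_right ?_ (Real.sqrt_nonneg _)
    exact Real.sqrt_le_sqrt (le_trans (hM₀ n) (le_max_left _ _))
  have hFsub : ∀ τ ∈ fr.F, ∀ σ ∈ fr.F, (fun x => τ x - σ x) ∈ fr.F := by
    intro τ hτ σ hσ
    have := fr.F_linear τ hτ σ hσ 1 (-1)
    simpa [sub_eq_add_neg] using this
  -- dense sequence in Lp
  haveI : Nonempty (Lp ℝ 2 (fr.ν 0)) := ⟨0⟩
  obtain ⟨u, hu⟩ := TopologicalSpace.exists_dense_seq (Lp ℝ 2 (fr.ν 0))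
  have hrep : ∀ j : ℕ, ∃ f : E → ℝ, Measurable f ∧ MemLp f 2 (fr.ν 0) ∧ f =ᵐ[fr.ν 0] u j := by
    intro j
    refine ⟨(Lp.aestronglyMeasurable (u j)).mk _,
      (Lp.aestronglyMeasurable (u j)).stronglyMeasurable_mk.measurable,
      (Lp.memLp (u j)).ae_eq (Lp.aestronglyMeasurable (u j)).ae_eq_mk,
      ((Lp.aestronglyMeasurable (u j)).ae_eq_mk).symm⟩
  choose d hd1 hd2 hd3 using hrep
  have hdLp : ∀ j, (hd2 j).toLp (d j) = u j := by
    intro j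
    rw [MemLp.toLp_congr (hd2 j) (Lp.memLp (u j)) (hd3 j)]
    exact Lp.toLp_coeFn _ _
  -- countable approximating family in F
  have hTex : ∀ i : ℕ × ℕ, ∃ τ ∈ fr.F,
      ip (fr.ν 0) (fun x => d i.1 x - τ x) (fun x => d i.1 x - τ x) < 1 / (i.2 + 1) := by
    intro i
    exact fr.F_dense (d i.1) (hd1 i.1) (hd2 i.1) _ (by positivity)
  choose T hTF hTclose using hTex
  have hTdense : ∀ (g : E → ℝ) (hg2 : MemLp g 2 (fr.ν 0)), ∀ ε : ℝ, 0 < ε →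
      ∃ i : ℕ × ℕ, ‖hg2.toLp g - (fr.F_memL2 _ (hTF i) 0).toLp (T i)‖ < ε := by
    intro g hg2 ε hε
    obtain ⟨j, hj⟩ := Metric.denseRange_iff.mp hu (hg2.toLp g) (ε / 2) (by positivity)
    obtain ⟨m, hm⟩ := exists_nat_one_div_lt (show (0:ℝ) < (ε / 2) ^ 2 by positivity)
    refine ⟨(j, m), ?_⟩
    have h1 : ‖(hd2 j).toLp (d j) - (fr.F_memL2 _ (hTF (j, m)) 0).toLp (T (j, m))‖ < ε / 2 := by
      have h2 := hTclose (j, m)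
      rw [ip_sub_self (hd2 j) (fr.F_memL2 _ (hTF (j, m)) 0)] at h2
      have h3 : ‖(hd2 j).toLp (d j) - (fr.F_memL2 _ (hTF (j, m)) 0).toLp (T (j, m))‖ ^ 2
          < (ε / 2) ^ 2 := lt_trans h2 (by exact_mod_cast hm)
      have := Real.sqrt_lt_sqrt (sq_nonneg _) h3
      rwa [Real.sqrt_sq (norm_nonneg _), Real.sqrt_sq (by positivity)] at this
    calc ‖hg2.toLp g - (fr.F_memL2 _ (hTF (j, m)) 0).toLp (T (j, m))‖
        = dist (hg2.toLp g) ((fr.F_memL2 _ (hTF (j, m)) 0).toLp (T (j, m))) := (dist_eq_norm _ _).symm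
      _ ≤ dist (hg2.toLp g) (u j) + dist (u j) ((fr.F_memL2 _ (hTF (j, m)) 0).toLp (T (j, m))) :=
          dist_triangle _ _ _
      _ < ε / 2 + ε / 2 := by
          refine add_lt_add hj ?_
          rw [dist_eq_norm, ← hdLp j]
          exact h1
      _ = ε := by ring
  -- uniform bounds for the approximating family
  have hCex : ∀ i : ℕ × ℕ, ∃ c : ℝ, ∀ n, ip (fr.ν n) (T i) (T i) ≤ c := by
    intro i
    obtain ⟨c, hc⟩ := (fr.F_tendsto (T i) (hTF i)).bddAbove_range
    exact ⟨c, fun n => hc (Set.mem_range_self n)⟩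
  choose Cb hCb using hCex
  -- compactness
  set S : Set ((ℕ × ℕ) → ℝ) :=
    Set.univ.pi fun i => Set.Icc (-(R * Real.sqrt (Cb i))) (R * Real.sqrt (Cb i)) with hSdef
  have hScomp : IsCompact S := isCompact_univ_pi fun i => isCompact_Icc
  have hxS : ∀ n, (fun i => ip (fr.ν n) (φs n) (T i)) ∈ S := by
    intro n
    rw [hSdef, Set.mem_univ_pi]
    intro i
    have h1 := hcs n (T i) (fr.F_memL2 _ (hTF i) n)
    have h2 : Real.sqrt (ip (fr.ν n) (T i) (T i)) ≤ Real.sqrt (Cb i) :=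
      Real.sqrt_le_sqrt (hCb i n)
    have h3 : |ip (fr.ν n) (φs n) (T i)| ≤ R * Real.sqrt (Cb i) :=
      le_trans h1 (mul_le_mul_of_nonneg_left h2 hRnn)
    exact Set.mem_Icc.mpr ⟨neg_le_of_abs_le h3, le_of_abs_le h3⟩
  obtain ⟨ℓ, hℓS, nk, hnk, hconv⟩ := hScomp.tendsto_subseq hxS
  have hnk' : Tendsto nk atTop atTop := hnk.tendsto_atTop
  have hconv' : ∀ i, Tendsto (fun k => ip (fr.ν (nk k)) (φs (nk k)) (T i)) atTop (𝓝 (ℓ i)) :=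
    fun i => tendsto_pi_nhds.mp hconv i
  -- convergence for every element of F
  have hbF : ∀ τ : {σ : E → ℝ // σ ∈ fr.F}, ∃ l : ℝ,
      Tendsto (fun k => ip (fr.ν (nk k)) (φs (nk k)) τ.1) atTop (𝓝 l) := by
    rintro ⟨τ, hτ⟩
    apply cauchySeq_tendsto_of_complete
    rw [Metric.cauchySeq_iff]
    intro ε hε
    have hR1 : (0:ℝ) < R + 1 := by linarith
    set δ : ℝ := ε / (4 * (R + 1)) with hδdef
    have hδ : 0 < δ := by positivity
    have hRδ : (R + 1) * δ = ε / 4 := by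
      rw [hδdef]; field_simp
    obtain ⟨i, hi⟩ := hTdense τ (fr.F_memL2 τ hτ 0) δ hδ
    have hsubF := hFsub τ hτ (T i) (hTF i)
    have htend := fr.F_tendsto _ hsubF
    have hlim : ip (fr.ν 0) (fun x => τ x - T i x) (fun x => τ x - T i x) < δ ^ 2 := by
      rw [ip_sub_self (fr.F_memL2 τ hτ 0) (fr.F_memL2 _ (hTF i) 0)]
      exact pow_lt_pow_left₀ hi (norm_nonneg _) two_ne_zero
    have hev : ∀ᶠ k in atTop,
        ip (fr.ν (nk k)) (fun x => τ x - T i x) (fun x => τ x - T i x) < δ ^ 2 :=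
      hnk'.eventually (htend.eventually_lt_const hlim)
    have key : ∀ k, ip (fr.ν (nk k)) (fun x => τ x - T i x) (fun x => τ x - T i x) < δ ^ 2 →
        |ip (fr.ν (nk k)) (φs (nk k)) τ - ip (fr.ν (nk k)) (φs (nk k)) (T i)| ≤ R * δ := by
      intro k hk
      rw [← ip_sub_right (hφsmem (nk k) (nk k)) (fr.F_memL2 τ hτ (nk k))
        (fr.F_memL2 _ (hTF i) (nk k))]
      refine le_trans (hcs (nk k) _ ((fr.F_memL2 τ hτ (nk k)).sub (fr.F_memL2 _ (hTF i) (nk k)))) ?_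
      refine mul_le_mul_of_nonneg_left ?_ hRnn
      calc Real.sqrt (ip (fr.ν (nk k)) (fun x => τ x - T i x) (fun x => τ x - T i x))
          ≤ Real.sqrt (δ ^ 2) := Real.sqrt_le_sqrt hk.le
        _ = δ := Real.sqrt_sq hδ.le
    have hC := (hconv' i).cauchySeq
    rw [Metric.cauchySeq_iff] at hC
    obtain ⟨N1, hN1⟩ := hC (ε / 4) (by positivity)
    obtain ⟨N2, hN2⟩ := eventually_atTop.mp hev
    refine ⟨max N1 N2, fun m hm n hn => ?_⟩
    have t1 := key m (hN2 m (le_trans (le_max_right _ _) hm))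
    have t2 := key n (hN2 n (le_trans (le_max_right _ _) hn))
    have t3 := hN1 m (le_trans (le_max_left _ _) hm) n (le_trans (le_max_left _ _) hn)
    rw [Real.dist_eq] at t3 ⊢
    have habs : |ip (fr.ν (nk m)) (φs (nk m)) τ - ip (fr.ν (nk n)) (φs (nk n)) τ|
        ≤ |ip (fr.ν (nk m)) (φs (nk m)) τ - ip (fr.ν (nk m)) (φs (nk m)) (T i)|
          + (|ip (fr.ν (nk m)) (φs (nk m)) (T i) - ip (fr.ν (nk n)) (φs (nk n)) (T i)|
          + |ip (fr.ν (nk n)) (φs (nk n)) τ - ip (fr.ν (nk n)) (φs (nk n)) (T i)|) := by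
      rw [abs_sub_comm (ip (fr.ν (nk n)) (φs (nk n)) τ)]
      calc |ip (fr.ν (nk m)) (φs (nk m)) τ - ip (fr.ν (nk n)) (φs (nk n)) τ|
          = |(ip (fr.ν (nk m)) (φs (nk m)) τ - ip (fr.ν (nk m)) (φs (nk m)) (T i))
            + ((ip (fr.ν (nk m)) (φs (nk m)) (T i) - ip (fr.ν (nk n)) (φs (nk n)) (T i))
            + (ip (fr.ν (nk n)) (φs (nk n)) (T i) - ip (fr.ν (nk n)) (φs (nk n)) τ))| := by
            ring_nf
        _ ≤ _ := by
            refine le_trans (abs_add_le _ _) ?_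
            refine add_le_add_right (le_trans (abs_add_le _ _) ?_) _
            rw [abs_sub_comm (ip (fr.ν (nk n)) (φs (nk n)) (T i))]
    have hRd : R * δ < ε / 4 := by nlinarith
    linarith [habs, t1, t2, t3]
  choose L hL using hbF
  have hLbound : ∀ τ : {σ : E → ℝ // σ ∈ fr.F},
      |L τ| ≤ R * Real.sqrt (ip (fr.ν 0) τ.1 τ.1) := by
    intro τ
    have h1 : Tendsto (fun k => |ip (fr.ν (nk k)) (φs (nk k)) τ.1|) atTop (𝓝 |L τ|) :=
      (hL τ).abs
    have h2 : Tendsto (fun k => R * Real.sqrt (ip (fr.ν (nk k)) τ.1 τ.1)) atTop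
        (𝓝 (R * Real.sqrt (ip (fr.ν 0) τ.1 τ.1))) :=
      (((fr.F_tendsto τ.1 τ.2).comp hnk').sqrt).const_mul R
    exact le_of_tendsto_of_tendsto' h1 h2 fun k => hcs (nk k) τ.1 (fr.F_memL2 τ.1 τ.2 (nk k))
  have hLcombo : ∀ (τ σ : {σ : E → ℝ // σ ∈ fr.F}) (a b : ℝ)
      (hc : (fun x => a * τ.1 x + b * σ.1 x) ∈ fr.F),
      L ⟨_, hc⟩ = a * L τ + b * L σ := by
    intro τ σ a b hc
    refine tendsto_nhds_unique (hL ⟨_, hc⟩) ?_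
    have heq : ∀ k, ip (fr.ν (nk k)) (φs (nk k)) (fun x => a * τ.1 x + b * σ.1 x)
        = a * ip (fr.ν (nk k)) (φs (nk k)) τ.1 + b * ip (fr.ν (nk k)) (φs (nk k)) σ.1 :=
      fun k => ip_combo_right (hφsmem (nk k) (nk k)) (fr.F_memL2 τ.1 τ.2 (nk k))
        (fr.F_memL2 σ.1 σ.2 (nk k)) a b (fr.F_memL2 _ hc (nk k))
    exact Tendsto.congr (fun k => (heq k).symm) (((hL τ).const_mul a).add ((hL σ).const_mul b))
  have hLeq : ∀ (τ σ : {σ : E → ℝ // σ ∈ fr.F}),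
      (fr.F_memL2 τ.1 τ.2 0).toLp τ.1 = (fr.F_memL2 σ.1 σ.2 0).toLp σ.1 → L τ = L σ := by
    intro τ σ he
    have hsF : (fun x => (1:ℝ) * τ.1 x + (-1) * σ.1 x) ∈ fr.F :=
      fr.F_linear _ τ.2 _ σ.2 1 (-1)
    have h1 : L ⟨_, hsF⟩ = 1 * L τ + (-1) * L σ := hLcombo τ σ 1 (-1) hsF
    have h2 := hLbound ⟨_, hsF⟩
    have h3 : ip (fr.ν 0) (fun x => (1:ℝ) * τ.1 x + (-1) * σ.1 x)
        (fun x => (1:ℝ) * τ.1 x + (-1) * σ.1 x) = 0 := by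
      rw [ip_self_eq (fr.F_memL2 _ hsF 0),
        toLp_combo (fr.F_memL2 τ.1 τ.2 0) (fr.F_memL2 σ.1 σ.2 0) 1 (-1) (fr.F_memL2 _ hsF 0), he]
      simp
    rw [h3, Real.sqrt_zero, mul_zero] at h2
    have h4 : L ⟨_, hsF⟩ = 0 := abs_eq_zero.mp (le_antisymm h2 (abs_nonneg _))
    rw [h4] at h1
    linarith
  -- the submodule of F-images and the limit functional
  obtain ⟨τ₀, hτ₀F, _⟩ := fr.F_dense (fun _ => 0) measurable_const (memLp_const 0) 1 one_pos
  have hzeroF : (fun x => (0:ℝ) * τ₀ x + 0 * τ₀ x) ∈ fr.F := fr.F_linear _ hτ₀F _ hτ₀F 0 0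
  set Y : Submodule ℝ (Lp ℝ 2 (fr.ν 0)) :=
    { carrier := {y | ∃ τ : {σ : E → ℝ // σ ∈ fr.F}, (fr.F_memL2 τ.1 τ.2 0).toLp τ.1 = y}
      add_mem' := by
        rintro y z ⟨τ, hτ⟩ ⟨σ, hσ⟩
        refine ⟨⟨_, fr.F_linear _ τ.2 _ σ.2 1 1⟩, ?_⟩
        rw [toLp_combo (fr.F_memL2 τ.1 τ.2 0) (fr.F_memL2 σ.1 σ.2 0) 1 1, one_smul, one_smul,
          hτ, hσ]
      zero_mem' := by
        refine ⟨⟨_, hzeroF⟩, ?_⟩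
        rw [toLp_combo (fr.F_memL2 τ₀ hτ₀F 0) (fr.F_memL2 τ₀ hτ₀F 0) 0 0]
        simp
      smul_mem' := by
        rintro c y ⟨τ, hτ⟩
        refine ⟨⟨_, fr.F_linear _ τ.2 _ τ.2 c 0⟩, ?_⟩
        rw [toLp_combo (fr.F_memL2 τ.1 τ.2 0) (fr.F_memL2 τ.1 τ.2 0) c 0, zero_smul, add_zero, hτ]
    } with hYdef
  have hmemY : ∀ τ : {σ : E → ℝ // σ ∈ fr.F}, (fr.F_memL2 τ.1 τ.2 0).toLp τ.1 ∈ Y :=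
    fun τ => ⟨τ, rfl⟩
  set L₀fun : Y → ℝ := fun y => L (Exists.choose y.2) with hL₀fundef
  have hL₀spec : ∀ y : Y, (fr.F_memL2 _ (Exists.choose y.2).2 0).toLp (Exists.choose y.2).1
      = (y : Lp ℝ 2 (fr.ν 0)) := fun y => Exists.choose_spec y.2
  have hL₀ : ∀ (y : Y) (τ : {σ : E → ℝ // σ ∈ fr.F}),
      (fr.F_memL2 τ.1 τ.2 0).toLp τ.1 = (y : Lp ℝ 2 (fr.ν 0)) → L₀fun y = L τ := by
    intro y τ h
    exact hLeq _ _ (by rw [hL₀spec y, ← h])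
  have hL₀add : ∀ y z : Y, L₀fun (y + z) = L₀fun y + L₀fun z := by
    intro y z
    set τy := Exists.choose y.2
    set τz := Exists.choose z.2
    have hcF : (fun x => (1:ℝ) * τy.1 x + 1 * τz.1 x) ∈ fr.F :=
      fr.F_linear _ τy.2 _ τz.2 1 1
    have h1 : L₀fun (y + z) = L ⟨_, hcF⟩ := by
      refine hL₀ (y + z) ⟨_, hcF⟩ ?_
      rw [toLp_combo (fr.F_memL2 τy.1 τy.2 0) (fr.F_memL2 τz.1 τz.2 0) 1 1, one_smul, one_smul,
        hL₀spec y, hL₀spec z]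
      rfl
    rw [h1, hLcombo τy τz 1 1 hcF, one_mul, one_mul]
  have hL₀smul : ∀ (c : ℝ) (y : Y), L₀fun (c • y) = c * L₀fun y := by
    intro c y
    set τy := Exists.choose y.2
    have hcF : (fun x => c * τy.1 x + 0 * τy.1 x) ∈ fr.F := fr.F_linear _ τy.2 _ τy.2 c 0
    have h1 : L₀fun (c • y) = L ⟨_, hcF⟩ := by
      refine hL₀ (c • y) ⟨_, hcF⟩ ?_
      rw [toLp_combo (fr.F_memL2 τy.1 τy.2 0) (fr.F_memL2 τy.1 τy.2 0) c 0, zero_smul, add_zero,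
        hL₀spec y]
      rfl
    rw [h1, hLcombo τy τy c 0 hcF, zero_mul, add_zero]
  have hL₀norm : ∀ y : Y, ‖L₀fun y‖ ≤ R * ‖y‖ := by
    intro y
    set τy := Exists.choose y.2
    have h1 : |L τy| ≤ R * Real.sqrt (ip (fr.ν 0) τy.1 τy.1) := hLbound τy
    rw [sqrt_ip_self (fr.F_memL2 τy.1 τy.2 0), hL₀spec y] at h1
    exact h1
  set L₀ : Y →L[ℝ] ℝ := LinearMap.mkContinuous
    { toFun := L₀fun
      map_add' := hL₀add
      map_smul' := hL₀smul } R hL₀norm with hL₀def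
  obtain ⟨g, hgext, hgnorm⟩ := exists_extension_norm_eq Y L₀
  have hgR : ‖g‖ ≤ R := by
    rw [hgnorm]
    exact LinearMap.mkContinuous_norm_le _ hRnn _
  set φH : Lp ℝ 2 (fr.ν 0) := (InnerProductSpace.toDual ℝ (Lp ℝ 2 (fr.ν 0))).symm g with hφHdef
  have hφHip : ∀ y : Lp ℝ 2 (fr.ν 0), ⟪φH, y⟫ = g y := fun y =>
    InnerProductSpace.toDual_symm_apply
  have hφHnorm : ‖φH‖ ≤ R := by
    rw [hφHdef, LinearIsometryEquiv.norm_map]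
    exact hgR
  -- measurable representative
  set φ : E → ℝ := (Lp.aestronglyMeasurable φH).mk _ with hφdef
  have hφmeas : Measurable φ := (Lp.aestronglyMeasurable φH).stronglyMeasurable_mk.measurable
  have hφae : (φH : E → ℝ) =ᵐ[fr.ν 0] φ := (Lp.aestronglyMeasurable φH).ae_eq_mk
  have hφmem : MemLp φ 2 (fr.ν 0) := (Lp.memLp φH).ae_eq hφae
  have hφtoLp : hφmem.toLp φ = φH := by
    rw [MemLp.toLp_congr hφmem (Lp.memLp φH) hφae.symm]
    exact Lp.toLp_coeFn _ _
  have hkey : ∀ τ : {σ : E → ℝ // σ ∈ fr.F}, L τ = ip (fr.ν 0) φ τ.1 := by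
    intro τ
    have h1 : ip (fr.ν 0) φ τ.1 = ⟪φH, (fr.F_memL2 τ.1 τ.2 0).toLp τ.1⟫ := by
      rw [ip_eq_inner hφmem (fr.F_memL2 τ.1 τ.2 0), hφtoLp]
    have h2 : g ((fr.F_memL2 τ.1 τ.2 0).toLp τ.1) = L τ := by
      have h3 := hgext ⟨_, hmemY τ⟩
      rw [h3]
      exact hL₀ ⟨_, hmemY τ⟩ τ rfl
    rw [h1, hφHip, h2]
  -- conclusion
  refine ⟨φ, nk, hφmeas, hφmem, hnk, ?_⟩
  intro ψ hψC
  obtain ⟨⟨hψmeas, hψmem, hψnorm⟩, _, hψF⟩ := hψC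
  rw [Metric.tendsto_nhds]
  intro ε hε
  have hR1 : (0:ℝ) < R + 1 := by linarith
  set δ : ℝ := ε / (4 * (R + 1)) with hδdef
  have hδ : 0 < δ := by positivity
  have hRδ : (R + 1) * δ = ε / 4 := by
    rw [hδdef]; field_simp
  have hRd : R * δ < ε / 4 := by nlinarith
  obtain ⟨τ, hτF, hτclose⟩ := fr.F_dense ψ hψmeas (hψmem 0) (δ ^ 2) (by positivity)
  -- term 3 : |L τ - ip ν0 φ ψ| ≤ R * δ
  have hsqrtτ : Real.sqrt (ip (fr.ν 0) (fun x => ψ x - τ x) (fun x => ψ x - τ x)) ≤ δ := by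
    calc Real.sqrt (ip (fr.ν 0) (fun x => ψ x - τ x) (fun x => ψ x - τ x))
        ≤ Real.sqrt (δ ^ 2) := Real.sqrt_le_sqrt hτclose.le
      _ = δ := Real.sqrt_sq hδ.le
  have ht3 : |ip (fr.ν 0) φ ψ - L ⟨τ, hτF⟩| ≤ R * δ := by
    rw [hkey ⟨τ, hτF⟩, ← ip_sub_right hφmem (hψmem 0) (fr.F_memL2 τ hτF 0)]
    refine le_trans (abs_ip_le hφmem ((hψmem 0).sub (fr.F_memL2 τ hτF 0))) ?_
    refine mul_le_mul ?_ hsqrtτ (Real.sqrt_nonneg _) hRnn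
    rw [sqrt_ip_self hφmem, hφtoLp]
    exact hφHnorm
  -- term 1 : eventually |ip_n(φs, ψ) - ip_n(φs, τ)| ≤ R * δ
  have htend : Tendsto (fun n => ip (fr.ν n) (fun x => ψ x - τ x) (fun x => ψ x - τ x)) atTop
      (𝓝 (ip (fr.ν 0) (fun x => ψ x - τ x) (fun x => ψ x - τ x))) := by
    have h0 := ip_sub_sub (hψmem 0) (fr.F_memL2 τ hτF 0)
    have hn : ∀ n, ip (fr.ν n) (fun x => ψ x - τ x) (fun x => ψ x - τ x)
        = ip (fr.ν n) ψ ψ - 2 * ip (fr.ν n) ψ τ + ip (fr.ν n) τ τ :=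
      fun n => ip_sub_sub (hψmem n) (fr.F_memL2 τ hτF n)
    rw [h0]
    refine Tendsto.congr (fun n => (hn n).symm) ?_
    exact (hψnorm.sub ((hψF τ hτF).const_mul 2)).add (fr.F_tendsto τ hτF)
  have hev1 : ∀ᶠ k in atTop,
      ip (fr.ν (nk k)) (fun x => ψ x - τ x) (fun x => ψ x - τ x) < δ ^ 2 := by
    refine hnk'.eventually (htend.eventually_lt_const ?_)
    exact hτclose
  have key1 : ∀ k, ip (fr.ν (nk k)) (fun x => ψ x - τ x) (fun x => ψ x - τ x) < δ ^ 2 →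
      |ip (fr.ν (nk k)) (φs (nk k)) ψ - ip (fr.ν (nk k)) (φs (nk k)) τ| ≤ R * δ := by
    intro k hk
    rw [← ip_sub_right (hφsmem (nk k) (nk k)) (hψmem (nk k)) (fr.F_memL2 τ hτF (nk k))]
    refine le_trans (hcs (nk k) _ ((hψmem (nk k)).sub (fr.F_memL2 τ hτF (nk k)))) ?_
    refine mul_le_mul_of_nonneg_left ?_ hRnn
    calc Real.sqrt (ip (fr.ν (nk k)) (fun x => ψ x - τ x) (fun x => ψ x - τ x))
        ≤ Real.sqrt (δ ^ 2) := Real.sqrt_le_sqrt hk.le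
      _ = δ := Real.sqrt_sq hδ.le
  -- term 2 : eventually |ip_n(φs, τ) - L τ| < ε / 4
  have hev2 : ∀ᶠ k in atTop,
      |ip (fr.ν (nk k)) (φs (nk k)) τ - L ⟨τ, hτF⟩| < ε / 4 := by
    have := Metric.tendsto_nhds.mp (hL ⟨τ, hτF⟩) (ε / 4) (by positivity)
    simpa [Real.dist_eq] using this
  filter_upwards [hev1, hev2] with k h1 h2
  rw [Real.dist_eq]
  have t1 := key1 k h1
  calc |ip (fr.ν (nk k)) (φs (nk k)) ψ - ip (fr.ν 0) φ ψ|
      = |(ip (fr.ν (nk k)) (φs (nk k)) ψ - ip (fr.ν (nk k)) (φs (nk k)) τ)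
        + ((ip (fr.ν (nk k)) (φs (nk k)) τ - L ⟨τ, hτF⟩)
        + (L ⟨τ, hτF⟩ - ip (fr.ν 0) φ ψ))| := by ring_nf
    _ ≤ |ip (fr.ν (nk k)) (φs (nk k)) ψ - ip (fr.ν (nk k)) (φs (nk k)) τ|
        + (|ip (fr.ν (nk k)) (φs (nk k)) τ - L ⟨τ, hτF⟩|
        + |L ⟨τ, hτF⟩ - ip (fr.ν 0) φ ψ|) :=
        le_trans (abs_add_le _ _) (add_le_add_right (abs_add_le _ _) _)
    _ < ε := by
        rw [abs_sub_comm (L ⟨τ, hτF⟩) (ip (fr.ν 0) φ ψ)]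
        linarith

end Mosco
end
end

section
/- If φ_n ∈ 𝓒 w-converges to φ ∈ L²(E, ν) and ψ_n ∈ 𝓒 s-converges to ψ ∈ L²(E, ν), then ⟨φ_n, ψ_n⟩_n → ⟨φ, ψ⟩ as n → ∞. -/
open MeasureTheory Filter Topology

noncomputable section

namespace Mosco

variable {E : Type*} [MeasurableSpace E]

/-- Products of L² functions are integrable. -/
lemma integrable_mul_of_memL2 {μ : Measure E} {f g : E → ℝ}
    (hf : MemLp f 2 μ) (hg : MemLp g 2 μ) :
    Integrable (fun x => f x * g x) μ := by
  refine Integrable.mono' ((hf.integrable_sq.add hg.integrable_sq).div_const 2)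
    (hf.1.mul hg.1) (Eventually.of_forall fun x => ?_)
  simp only [Pi.add_apply, Real.norm_eq_abs, abs_mul]
  nlinarith [sq_nonneg (|f x| - |g x|), sq_abs (f x), sq_abs (g x), abs_nonneg (f x),
    abs_nonneg (g x)]

lemma ip_congr_right {μ : Measure E} {f g g' : E → ℝ} (h : g =ᵐ[μ] g') :
    ip μ f g = ip μ f g' := by
  refine integral_congr_ae ?_
  filter_upwards [h] with x hx
  rw [hx]

lemma ip_congr_left {μ : Measure E} {f f' g : E → ℝ} (h : f =ᵐ[μ] f') :
    ip μ f g = ip μ f' g := by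
  refine integral_congr_ae ?_
  filter_upwards [h] with x hx
  rw [hx]

/-- Polarization identity for `ip`. -/
lemma ip_polarization {μ : Measure E} {f g : E → ℝ}
    (hf : MemLp f 2 μ) (hg : MemLp g 2 μ) :
    ip μ f g = (ip μ (fun x => f x + g x) (fun x => f x + g x) - ip μ f f - ip μ g g) / 2 := by
  have hff := integrable_mul_of_memL2 hf hf
  have hfg := integrable_mul_of_memL2 hf hg
  have hgg := integrable_mul_of_memL2 hg hg
  have hgf : Integrable (fun x => g x * f x) μ := integrable_mul_of_memL2 hg hf
  have hgf_eq : ∫ x, g x * f x ∂μ = ∫ x, f x * g x ∂μ :=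
    integral_congr_ae (Eventually.of_forall fun x => mul_comm _ _)
  have key : ip μ (fun x => f x + g x) (fun x => f x + g x)
      = ip μ f f + 2 * ip μ f g + ip μ g g := by
    unfold ip
    have e : (fun x => (f x + g x) * (f x + g x))
        = fun x => (f x * f x + f x * g x) + (g x * f x + g x * g x) := by
      funext x; ring
    have h1 : Integrable (fun x => f x * f x + f x * g x) μ := by exact hff.add hfg
    have h2 : Integrable (fun x => g x * f x + g x * g x) μ := by exact hgf.add hgg
    rw [e, integral_add h1 h2, integral_add hff hfg, integral_add hgf hgg, hgf_eq]
    ring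
  rw [key]; ring

/-- `𝓕 ⊆ 𝓒`. -/
lemma F_subset_C (fr : Frame E) : fr.F ⊆ fr.C := by
  intro f hf
  refine ⟨⟨fr.F_measurable f hf, fr.F_memL2 f hf, fr.F_tendsto f hf⟩,
    fun n _ => ⟨f, hf, EventuallyEq.rfl⟩, fun τ hτ => ?_⟩
  have hsum : (fun x => 1 * f x + 1 * τ x) ∈ fr.F := fr.F_linear f hf τ hτ 1 1
  have hpol : ∀ n, ip (fr.ν n) f τ
      = (ip (fr.ν n) (fun x => 1 * f x + 1 * τ x) (fun x => 1 * f x + 1 * τ x)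
        - ip (fr.ν n) f f - ip (fr.ν n) τ τ) / 2 := by
    intro n
    simpa [one_mul] using ip_polarization (fr.F_memL2 f hf n) (fr.F_memL2 τ hτ n)
  simp only [hpol]
  exact (((fr.F_tendsto _ hsum).sub (fr.F_tendsto f hf)).sub (fr.F_tendsto τ hτ)).div_const 2

/-- Proposition 2.3 (c): if `φs n ∈ 𝓒` `w`-converges to `φ ∈ L²(E, ν)` and
`ψs n ∈ 𝓒` `s`-converges to `ψ ∈ L²(E, ν)`, then `⟨φs n, ψs n⟩ₙ → ⟨φ, ψ⟩`. -/
theorem tendsto_ip_of_wconv_sconv (fr : Frame E) (φs ψs : ℕ → E → ℝ)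
    (hφs : ∀ n, φs n ∈ fr.C) (hψs : ∀ n, ψs n ∈ fr.C)
    (φ ψ : E → ℝ) (hφm : Measurable φ) (hφ2 : MemLp φ 2 (fr.ν 0))
    (hψm : Measurable ψ) (hψ2 : MemLp ψ 2 (fr.ν 0))
    (hw : fr.WConv φs φ) (hs : fr.SConv ψs ψ) :
    Tendsto (fun n => ip (fr.ν n) (φs n) (ψs n)) atTop (𝓝 (ip (fr.ν 0) φ ψ)) := by
  classical
  -- index function: `ind x = n` if `x ∈ En n` for some `n ≥ 1`, else `0`.
  have hdisj := fr.disjEn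
  set ind : E → ℕ := fun x => if h : ∃ n, 1 ≤ n ∧ x ∈ fr.En n then h.choose else 0 with hind
  have hind_mem : ∀ n, 1 ≤ n → ∀ x ∈ fr.En n, ind x = n := by
    intro n hn x hx
    have h : ∃ m, 1 ≤ m ∧ x ∈ fr.En m := ⟨n, hn, hx⟩
    have hc := h.choose_spec
    rw [hind]; simp only [dif_pos h]
    by_contra hne
    exact Set.disjoint_left.1 (hdisj _ _ hne) hc.2 hx
  have hind_zero : ∀ x, (¬ ∃ n, 1 ≤ n ∧ x ∈ fr.En n) → ind x = 0 := by
    intro x h; rw [hind]; simp [h]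
  have hind_meas : Measurable ind := by
    apply measurable_to_countable'
    intro n
    rcases Nat.eq_zero_or_pos n with rfl | hn
    · have : ind ⁻¹' {0} = (⋃ m, ⋃ _ : 1 ≤ m, fr.En m)ᶜ := by
        ext x
        simp only [Set.mem_preimage, Set.mem_singleton_iff, Set.mem_compl_iff, Set.mem_iUnion,
          not_exists]
        constructor
        · intro h0 m hm hx
          have := hind_mem m hm x hx
          omega
        · intro h; exact hind_zero x (fun ⟨m, hm, hx⟩ => h m hm hx)
      rw [this]
      exact (MeasurableSet.iUnion fun m => MeasurableSet.iUnion fun _ => fr.measEn m).compl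
    · have : ind ⁻¹' {n} = fr.En n := by
        ext x
        simp only [Set.mem_preimage, Set.mem_singleton_iff]
        constructor
        · intro h0
          by_cases h : ∃ m, 1 ≤ m ∧ x ∈ fr.En m
          · have hc := h.choose_spec
            rw [hind] at h0; simp only [dif_pos h] at h0
            rw [← h0]; exact hc.2
          · rw [hind_zero x h] at h0; omega
        · intro hx; exact hind_mem n hn x hx
      rw [this]; exact fr.measEn n
  -- the glued function Ψ
  set Ψ : E → ℝ := fun x => if ind x = 0 then ψ x else ψs (ind x) x with hΨ
  have hΨmeas : Measurable Ψ := by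
    have hg : Measurable (fun p : E × ℕ => if p.2 = 0 then ψ p.1 else ψs p.2 p.1) := by
      apply measurable_from_prod_countable_left
      intro n
      rcases Nat.eq_zero_or_pos n with rfl | hn
      · simpa using hψm
      · have : n ≠ 0 := by omega
        simpa [this] using (hψs n).1.1
    exact hg.comp (measurable_id.prodMk hind_meas)
  -- Ψ agrees with ψs n ν n-a.e. for n ≥ 1, and with ψ ν 0-a.e.
  have hΨn : ∀ n, 1 ≤ n → Ψ =ᵐ[fr.ν n] ψs n := by
    intro n hn
    refine (measure_mono_null ?_ (fr.nullEn n) : fr.ν n {x | Ψ x ≠ ψs n x} = 0)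
    intro x hx
    simp only [Set.mem_compl_iff]
    intro hxE
    apply hx
    have h1 := hind_mem n hn x hxE
    have h2 : ind x ≠ 0 := by omega
    simp only [hΨ, if_neg h2, h1]
  have hΨ0 : Ψ =ᵐ[fr.ν 0] ψ := by
    refine (measure_mono_null ?_ (fr.nullEn 0) : fr.ν 0 {x | Ψ x ≠ ψ x} = 0)
    intro x hx
    simp only [Set.mem_compl_iff]
    intro hxE
    apply hx
    have h0 : ind x = 0 := by
      apply hind_zero
      rintro ⟨m, hm, hxm⟩
      exact Set.disjoint_left.1 (hdisj 0 m (by omega)) hxE hxm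
    simp only [hΨ, if_pos h0]
  have hΨmem : ∀ n, MemLp Ψ 2 (fr.ν n) := by
    intro n
    rcases Nat.eq_zero_or_pos n with rfl | hn
    · exact hψ2.ae_eq hΨ0.symm
    · exact ((hψs n).1.2.1 n).ae_eq (hΨn n hn).symm
  -- norms of Ψ
  have hΨnorm : ∀ n, 1 ≤ n → ip (fr.ν n) Ψ Ψ = ip (fr.ν n) (ψs n) (ψs n) := by
    intro n hn
    exact integral_congr_ae (((hΨn n hn).mul (hΨn n hn)).mono fun x hx => hx)
  have hΨnorm0 : ip (fr.ν 0) Ψ Ψ = ip (fr.ν 0) ψ ψ :=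
    integral_congr_ae ((hΨ0.mul hΨ0).mono fun x hx => hx)
  -- Ψ ∈ 𝓒
  have hΨC : Ψ ∈ fr.C := by
    refine ⟨⟨hΨmeas, hΨmem, ?_⟩, ?_, ?_⟩
    · rw [hΨnorm0]
      refine Tendsto.congr' ?_ hs.2
      filter_upwards [eventually_ge_atTop 1] with n hn
      exact (hΨnorm n hn).symm
    · intro n hn
      obtain ⟨g, hg, hgeq⟩ := (hψs n).2.1 n hn
      exact ⟨g, hg, (hΨn n hn).trans hgeq⟩
    · intro τ hτ
      have h0 : ip (fr.ν 0) Ψ τ = ip (fr.ν 0) ψ τ := ip_congr_left hΨ0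
      rw [h0]
      refine Tendsto.congr' ?_ (hs.1 τ (F_subset_C fr hτ))
      filter_upwards [eventually_ge_atTop 1] with n hn
      exact (ip_congr_left (hΨn n hn)).symm
  -- conclude
  have hlim := hw Ψ hΨC
  have h0 : ip (fr.ν 0) φ Ψ = ip (fr.ν 0) φ ψ := ip_congr_right hΨ0
  rw [h0] at hlim
  refine Tendsto.congr' ?_ hlim
  filter_upwards [eventually_ge_atTop 1] with n hn
  exact ip_congr_right (hΨn n hn)

end Mosco
end
end
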